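/- Let D be a locally Egyptian integral domain with fraction field K, let L be a field extension of K, and let R be a ring with D ⊆ R ⊆ L such that R is finitely generated as a D-algebra. Then R is locally Egyptian. -/

import Mathlib

universe u

/-- A commutative ring `D` is *Egyptian* if every nonzero `d : D` is a sum of reciprocals
`d = 1/d₁ + ⋯ + 1/dₙ` of finitely many pairwise distinct nonzero elements `dᵢ` of `D`, the
equality holding in any field in which `D` embeds.  (For an integral domain `D` this is
equivalent to the usual definition, in which the equality is required in the fraction field
of `D`: such an equality holds in one field containing `D` iff it holds in all of them.) -/
def IsEgyptian (D : Type u) [CommRing D] : Prop :=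
  ∀ d : D, d ≠ 0 → ∃ s : Finset D, (∀ i ∈ s, i ≠ 0) ∧
    ∀ (K : Type u) [Field K] (φ : D →+* K), Function.Injective φ →
      φ d = ∑ i ∈ s, (φ i)⁻¹

/-- A domain `D` is *generically Egyptian* if `D[1/f]` is Egyptian for some nonzero `f : D`. -/
def IsGenericallyEgyptian (D : Type u) [CommRing D] : Prop :=
  ∃ f : D, f ≠ 0 ∧ IsEgyptian (Localization.Away f)

/-- A domain `D` is *locally Egyptian* if there is a finite set of generators of the unit
ideal of `D` such that inverting any one of them yields an Egyptian ring. -/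
def IsLocallyEgyptian (D : Type u) [CommRing D] : Prop :=
  ∃ s : Finset D, Ideal.span (s : Set D) = ⊤ ∧
    ∀ f ∈ s, IsEgyptian (Localization.Away f)


attribute [local instance] Classical.propDecidable

private lemma sum_prod_erase_eq {K : Type*} [Field K] (s : Finset K)
    (hs : ∀ i ∈ s, i ≠ 0) :
    ∑ i ∈ s, ∏ j ∈ s.erase i, j = (∑ i ∈ s, i⁻¹) * ∏ j ∈ s, j := by
  rw [Finset.sum_mul]
  refine Finset.sum_congr rfl fun i hi => ?_
  rw [← Finset.mul_prod_erase s _ hi, inv_mul_cancel_left₀ (hs i hi)]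

private def EgyEq {A : Type*} [CommRing A] (d : A) (s : Finset A) : Prop :=
  d * ∏ i ∈ s, i = ∑ i ∈ s, ∏ j ∈ s.erase i, j


private lemma sum_prod_erase_map {A : Type*} {K : Type*} [CommRing A] [Field K] (φ : A →+* K)
    (hφ : Function.Injective φ) (s : Finset A) (hne : ∀ i ∈ s, φ i ≠ 0) :
    ∑ i ∈ s, ∏ j ∈ s.erase i, φ j = (∑ i ∈ s, (φ i)⁻¹) * ∏ i ∈ s, φ i := by
  have key := sum_prod_erase_eq (s.image φ) (by
    intro i hi
    obtain ⟨a, ha, rfl⟩ := Finset.mem_image.1 hi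
    exact hne a ha)
  rw [Finset.prod_image (fun a _ b _ h => hφ h), Finset.sum_image (fun a _ b _ h => hφ h),
    Finset.sum_image (fun a _ b _ h => hφ h)] at key
  rw [← key]
  refine Finset.sum_congr rfl fun i hi => ?_
  rw [← Finset.image_erase hφ, Finset.prod_image (fun a _ b _ h => hφ h)]

private lemma egyEq_map {A : Type*} {K : Type*} [CommRing A] [Field K] (φ : A →+* K)
    (hφ : Function.Injective φ) (d : A) (s : Finset A) (hs : ∀ i ∈ s, i ≠ 0)
    (h : EgyEq d s) : φ d = ∑ i ∈ s, (φ i)⁻¹ := by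
  have hne : ∀ i ∈ s, φ i ≠ 0 := fun i hi h0 => hs i hi (hφ (by simpa using h0))
  have h2 : φ d * ∏ i ∈ s, φ i = ∑ i ∈ s, ∏ j ∈ s.erase i, φ j := by
    have := congrArg φ h
    simpa [map_sum, map_prod] using this
  have hprod : ∏ i ∈ s, φ i ≠ 0 := Finset.prod_ne_zero_iff.2 hne
  apply mul_right_cancel₀ hprod
  rw [h2, sum_prod_erase_map φ hφ s hne]

private lemma isEgyptian_of_egyEq {A : Type*} [CommRing A]
    (h : ∀ d : A, d ≠ 0 → ∃ s : Finset A, (∀ i ∈ s, i ≠ 0) ∧ EgyEq d s) :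
    IsEgyptian A := by
  intro d hd
  obtain ⟨s, hs, heq⟩ := h d hd
  exact ⟨s, hs, fun K _ φ hφ => egyEq_map φ hφ d s hs heq⟩

private lemma egyEq_of_isEgyptian {A : Type*} [CommRing A] [IsDomain A]
    (h : IsEgyptian A) : ∀ d : A, d ≠ 0 → ∃ s : Finset A, (∀ i ∈ s, i ≠ 0) ∧ EgyEq d s := by
  intro d hd
  obtain ⟨s, hs, hK⟩ := h d hd
  refine ⟨s, hs, ?_⟩
  set K := FractionRing A
  set φ := algebraMap A K with hφdef
  have hφ : Function.Injective φ := IsFractionRing.injective A K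
  have hd1 := hK K φ hφ
  have hne : ∀ i ∈ s, φ i ≠ 0 := fun i hi h0 => hs i hi (hφ (by simpa using h0))
  apply hφ
  rw [map_mul, map_prod, map_sum, hd1]
  rw [show (∑ i ∈ s, φ (∏ j ∈ s.erase i, j)) = ∑ i ∈ s, ∏ j ∈ s.erase i, φ j from
    Finset.sum_congr rfl fun i _ => map_prod φ _ _]
  rw [sum_prod_erase_map φ hφ s hne]

section SectionL
variable {L : Type u} [Field L]

/-- `x` is a sum of distinct unit fractions with denominators in `S`. -/
private def Egy (S : Set L) (x : L) : Prop :=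
  ∃ s : Finset L, (↑s : Set L) ⊆ S ∧ (∀ i ∈ s, i ≠ 0) ∧ x = ∑ i ∈ s, i⁻¹

private def EgySubring (B : Subring L) : Prop :=
  ∀ x ∈ B, x ≠ 0 → Egy (B : Set L) x

/-- Transfer from abstract Egyptianness to the subring-of-`L` picture. -/
private lemma egySubring_range {A : Type*} [CommRing A] [IsDomain A] (ψ : A →+* L)
    (hψ : Function.Injective ψ) (hA : IsEgyptian A) : EgySubring ψ.range := by
  rintro x hx hx0
  obtain ⟨d, rfl⟩ := hx
  have hd : d ≠ 0 := fun h => hx0 (by simp [h])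
  obtain ⟨s, hs, heq⟩ := egyEq_of_isEgyptian hA d hd
  refine ⟨s.image ψ, ?_, ?_, ?_⟩
  · intro i hi
    obtain ⟨a, _, rfl⟩ := Finset.mem_image.1 (by exact_mod_cast hi)
    exact ⟨a, rfl⟩
  · intro i hi
    obtain ⟨a, ha, rfl⟩ := Finset.mem_image.1 hi
    exact fun h0 => hs a ha (hψ (by simpa using h0))
  · rw [Finset.sum_image (fun a _ b _ h => hψ h)]
    exact egyEq_map ψ hψ d s hs heq

/-- Conversely. -/
private lemma isEgyptian_of_egySubring {A : Type*} [CommRing A] (ψ : A →+* L)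
    (hψ : Function.Injective ψ) (hE : EgySubring ψ.range) : IsEgyptian A := by
  apply isEgyptian_of_egyEq
  intro d hd
  obtain ⟨s, hsub, hne, hsum⟩ := hE (ψ d) ⟨d, rfl⟩ (fun h0 => hd (hψ (by simpa using h0)))
  have hsr : ∀ x ∈ s, x ∈ Set.range ψ := fun x hx => hsub hx
  set s' : Finset A := s.preimage ψ (Set.injOn_of_injective hψ)
  have himg : s'.image ψ = s := by
    rw [Finset.image_preimage]
    exact Finset.filter_true_of_mem (fun x hx => hsr x hx)
  have hne' : ∀ i ∈ s', i ≠ 0 := by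
    intro i hi h0
    have : ψ i ∈ s := by
      have := Finset.mem_preimage.1 hi; exact this
    exact hne _ this (by simp [h0])
  refine ⟨s', hne', ?_⟩
  have hneψ : ∀ i ∈ s', ψ i ≠ 0 := fun i hi h0 => hne' i hi (hψ (by simpa using h0))
  apply hψ
  rw [map_mul, map_prod, map_sum]
  rw [show (∑ i ∈ s', ψ (∏ j ∈ s'.erase i, j)) = ∑ i ∈ s', ∏ j ∈ s'.erase i, ψ j from
    Finset.sum_congr rfl fun i _ => map_prod ψ _ _]
  rw [sum_prod_erase_map ψ hψ s' hneψ]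
  congr 1
  rw [hsum, ← himg, Finset.sum_image (fun a _ b _ h => hψ h)]

private lemma bridge {A : Type*} [CommRing A] (ψ : A →+* L) (hψ : Function.Injective ψ)
    (f : A) (hf : f ≠ 0) :
    ∃ ψ' : Localization.Away f →+* L, Function.Injective ψ' ∧
      (ψ'.range : Subring L) = Subring.closure (↑ψ.range ∪ {(ψ f)⁻¹}) := by
  have hψf : ψ f ≠ 0 := fun h => hf (hψ (by simpa using h))
  have hu : IsUnit (ψ f) := isUnit_iff_ne_zero.2 hψf
  set S := Localization.Away f
  set ψ' : S →+* L := Localization.awayLift ψ f hu with hψ'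
  have heq : ∀ a : A, ψ' (algebraMap A S a) = ψ a := fun a =>
    IsLocalization.Away.lift_eq f hu a
  have hrep : ∀ z : S, ∃ (a : A) (n : ℕ),
      z * algebraMap A S (f ^ n) = algebraMap A S a := by
    intro z
    obtain ⟨⟨x, y⟩, hxy⟩ := IsLocalization.mk'_surjective (Submonoid.powers f) z
    dsimp only at hxy
    obtain ⟨n, hn⟩ := y.2
    refine ⟨x, n, ?_⟩
    rw [show f ^ n = (y : A) from hn, ← hxy]
    exact IsLocalization.mk'_spec S x y
  have hval : ∀ (z : S) (a : A) (n : ℕ), z * algebraMap A S (f ^ n) = algebraMap A S a →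
      ψ' z * (ψ f) ^ n = ψ a := by
    intro z a n h
    have := congrArg ψ' h
    rw [map_mul, heq, heq, map_pow] at this
    exact this
  have hunit : ∀ n : ℕ, IsUnit (algebraMap A S (f ^ n)) :=
    fun n => IsLocalization.map_units S ⟨f ^ n, pow_mem (Submonoid.mem_powers f) n⟩
  have hinj : Function.Injective ψ' := by
    intro z z' h
    obtain ⟨a, n, ha⟩ := hrep z
    obtain ⟨a', n', ha'⟩ := hrep z'
    have h1 : ψ' z * (ψ f) ^ n = ψ a := hval z a n ha
    have h2 : ψ' z' * (ψ f) ^ n' = ψ a' := hval z' a' n' ha'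
    have key : ψ (a * f ^ n') = ψ (a' * f ^ n) := by
      rw [map_mul, map_mul, map_pow, map_pow, ← h1, ← h2, h]
      ring
    have keyA : a * f ^ n' = a' * f ^ n := hψ key
    have hcc : z * algebraMap A S (f ^ (n + n')) = z' * algebraMap A S (f ^ (n + n')) := by
      calc z * algebraMap A S (f ^ (n + n'))
          = (z * algebraMap A S (f ^ n)) * algebraMap A S (f ^ n') := by
            rw [pow_add, map_mul, mul_assoc]
        _ = algebraMap A S (a * f ^ n') := by rw [ha, ← map_mul]
        _ = algebraMap A S (a' * f ^ n) := by rw [keyA]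
        _ = (z' * algebraMap A S (f ^ n')) * algebraMap A S (f ^ n) := by
            rw [ha', ← map_mul]
        _ = z' * algebraMap A S (f ^ (n + n')) := by
            rw [pow_add, map_mul, mul_assoc, mul_comm (algebraMap A S (f ^ n')) _]
    exact (hunit (n + n')).mul_left_cancel
      (by rw [mul_comm _ z, mul_comm _ z']; exact hcc)
  refine ⟨ψ', hinj, ?_⟩
  apply le_antisymm
  · rintro x ⟨z, rfl⟩
    obtain ⟨a, n, ha⟩ := hrep z
    have h1 : ψ' z * (ψ f) ^ n = ψ a := hval z a n ha
    have hz : ψ' z = ψ a * ((ψ f)⁻¹) ^ n := by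
      rw [inv_pow]
      exact (eq_mul_inv_iff_mul_eq₀ (pow_ne_zero n hψf)).2 h1
    rw [hz]
    have m1 : (ψ a : L) ∈ Subring.closure (↑ψ.range ∪ {(ψ f)⁻¹}) :=
      Subring.subset_closure (Set.mem_union_left _ ⟨a, rfl⟩)
    have m2 : ((ψ f)⁻¹ : L) ∈ Subring.closure (↑ψ.range ∪ {(ψ f)⁻¹}) :=
      Subring.subset_closure (Set.mem_union_right _ rfl)
    exact mul_mem m1 (pow_mem m2 n)
  · rw [Subring.closure_le]
    rintro x (⟨a, rfl⟩ | hx)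
    · exact ⟨algebraMap A S a, heq a⟩
    · simp only [Set.mem_singleton_iff] at hx
      subst hx
      obtain ⟨u, hu'⟩ := hunit 1
      refine ⟨↑u⁻¹, ?_⟩
      have h1 : ψ' ↑u⁻¹ * ψ' ↑u = 1 := by
        rw [← map_mul]
        simp
      rw [hu', heq, pow_one] at h1
      exact eq_inv_of_mul_eq_one_left h1

/-- The "fraction field of `A`" inside `L`, as a set. -/
private def FASet (A : Subring L) : Set L := {x | ∃ p ∈ A, ∃ q ∈ A, q ≠ 0 ∧ x = p / q}

section FA
variable {A : Subring L}

private lemma fa_of_mem {a : L} (ha : a ∈ A) : a ∈ FASet A :=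
  ⟨a, ha, 1, one_mem A, one_ne_zero, by simp⟩

private lemma fa_zero : (0 : L) ∈ FASet A := fa_of_mem (zero_mem A)
private lemma fa_one : (1 : L) ∈ FASet A := fa_of_mem (one_mem A)

private lemma fa_mul {x y : L} (hx : x ∈ FASet A) (hy : y ∈ FASet A) : x * y ∈ FASet A := by
  obtain ⟨p, hp, q, hq, hq0, rfl⟩ := hx
  obtain ⟨p', hp', q', hq', hq0', rfl⟩ := hy
  exact ⟨p * p', mul_mem hp hp', q * q', mul_mem hq hq', mul_ne_zero hq0 hq0',
    by field_simp⟩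

private lemma fa_add {x y : L} (hx : x ∈ FASet A) (hy : y ∈ FASet A) : x + y ∈ FASet A := by
  obtain ⟨p, hp, q, hq, hq0, rfl⟩ := hx
  obtain ⟨p', hp', q', hq', hq0', rfl⟩ := hy
  refine ⟨p * q' + p' * q, add_mem (mul_mem hp hq') (mul_mem hp' hq),
    q * q', mul_mem hq hq', mul_ne_zero hq0 hq0', by rw [div_add_div _ _ hq0 hq0']; ring_nf⟩

private lemma fa_neg {x : L} (hx : x ∈ FASet A) : -x ∈ FASet A := by
  obtain ⟨p, hp, q, hq, hq0, rfl⟩ := hx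
  exact ⟨-p, neg_mem hp, q, hq, hq0, by rw [neg_div]⟩

private lemma fa_inv {x : L} (hx : x ∈ FASet A) : x⁻¹ ∈ FASet A := by
  obtain ⟨p, hp, q, hq, hq0, rfl⟩ := hx
  by_cases hp0 : p = 0
  · simp [hp0, fa_zero]
  · exact ⟨q, hq, p, hp, hp0, by field_simp⟩

private lemma fa_div {x y : L} (hx : x ∈ FASet A) (hy : y ∈ FASet A) : x / y ∈ FASet A := by
  rw [div_eq_mul_inv]; exact fa_mul hx (fa_inv hy)

private lemma fa_pow {x : L} (hx : x ∈ FASet A) (n : ℕ) : x ^ n ∈ FASet A := by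
  induction n with
  | zero => simpa using fa_one
  | succ n ih => rw [pow_succ]; exact fa_mul ih hx

private lemma fa_zpow {x : L} (hx : x ∈ FASet A) (k : ℤ) : x ^ k ∈ FASet A := by
  cases k with
  | ofNat n => rw [Int.ofNat_eq_coe, zpow_natCast]; exact fa_pow hx n
  | negSucc n => rw [zpow_negSucc]; exact fa_inv (fa_pow hx (n + 1))

private lemma fa_sum {ι : Type*} (s : Finset ι) (f : ι → L) (hf : ∀ i ∈ s, f i ∈ FASet A) :
    (∑ i ∈ s, f i) ∈ FASet A := by
  classical
  induction s using Finset.induction_on with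
  | empty => simpa using fa_zero
  | insert _ _ hx ih =>
    rw [Finset.sum_insert hx]
    exact fa_add (hf _ (Finset.mem_insert_self _ _))
      (ih fun i hi => hf i (Finset.mem_insert_of_mem hi))
end FA

private lemma zpow_mem_subring {T : Subring L} {b : L} (hb : b ∈ T) (hbi : b⁻¹ ∈ T) (k : ℤ) :
    b ^ k ∈ T := by
  cases k with
  | ofNat n => rw [Int.ofNat_eq_coe, zpow_natCast]; exact pow_mem hb n
  | negSucc n => rw [zpow_negSucc, ← inv_pow]; exact pow_mem hbi (n + 1)

/-- Representation of elements of `A[b, b⁻¹]` as Laurent-type sums. -/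
private lemma rep_lemma (A : Subring L) (b : L) (hb : b ≠ 0) {x : L}
    (hx : x ∈ Subring.closure ((A : Set L) ∪ {b, b⁻¹})) :
    ∃ (F : Finset ℤ) (γ : ℤ → L), (∀ k, γ k ∈ FASet A) ∧ (∀ k ∉ F, γ k = 0) ∧
      x = ∑ k ∈ F, γ k * b ^ k := by
  set P : L → Prop := fun x => ∃ (F : Finset ℤ) (γ : ℤ → L),
    (∀ k, γ k ∈ FASet A) ∧ (∀ k ∉ F, γ k = 0) ∧ x = ∑ k ∈ F, γ k * b ^ k with hP
  have single : ∀ (c : L) (j : ℤ), c ∈ FASet A → P (c * b ^ j) := by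
    intro c j hc
    refine ⟨{j}, fun k => if k = j then c else 0, ?_, ?_, by simp⟩
    · intro k; by_cases h : k = j <;> simp [h, hc, fa_zero]
    · intro k hk; simp only [Finset.mem_singleton] at hk; simp [hk]
  have Padd : ∀ x y, P x → P y → P (x + y) := by
    rintro x y ⟨F, γ, hγ, hγ0, rfl⟩ ⟨F', γ', hγ', hγ0', rfl⟩
    refine ⟨F ∪ F', fun k => γ k + γ' k, fun k => fa_add (hγ k) (hγ' k), ?_, ?_⟩
    · intro k hk
      dsimp only
      rw [hγ0 k (fun h => hk (Finset.mem_union_left _ h)),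
        hγ0' k (fun h => hk (Finset.mem_union_right _ h)), add_zero]
    · have e1 : ∑ k ∈ F, γ k * b ^ k = ∑ k ∈ F ∪ F', γ k * b ^ k :=
        Finset.sum_subset Finset.subset_union_left
          (fun k _ hk => by rw [hγ0 k hk, zero_mul])
      have e2 : ∑ k ∈ F', γ' k * b ^ k = ∑ k ∈ F ∪ F', γ' k * b ^ k :=
        Finset.sum_subset Finset.subset_union_right
          (fun k _ hk => by rw [hγ0' k hk, zero_mul])
      rw [e1, e2, ← Finset.sum_add_distrib]
      exact Finset.sum_congr rfl fun k _ => by ring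
  have Pmono : ∀ (c : L) (j : ℤ) y, c ∈ FASet A → P y → P (c * b ^ j * y) := by
    rintro c j y hc ⟨F', γ', hγ', hγ0', rfl⟩
    refine ⟨F'.image (· + j), fun n => c * γ' (n - j), fun n => fa_mul hc (hγ' (n - j)),
      ?_, ?_⟩
    · intro n hn
      have h2 : n - j ∉ F' := fun h => hn (Finset.mem_image.2 ⟨n - j, h, by ring⟩)
      dsimp only
      rw [hγ0' _ h2, mul_zero]
    · rw [Finset.sum_image (fun a _ b _ h => by omega), Finset.mul_sum]
      refine Finset.sum_congr rfl fun l _ => ?_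
      dsimp only
      rw [add_sub_cancel_right, zpow_add₀ hb]
      ring
  have Pzero : P 0 := ⟨∅, fun _ => 0, fun _ => fa_zero, fun _ _ => rfl, by simp⟩
  have Pneg : ∀ y, P y → P (-y) := by
    rintro y ⟨F, γ, hγ, hγ0, rfl⟩
    refine ⟨F, fun k => -γ k, fun k => fa_neg (hγ k), fun k hk => by
      dsimp only; rw [hγ0 k hk, neg_zero], ?_⟩
    rw [← Finset.sum_neg_distrib]
    exact Finset.sum_congr rfl fun k _ => by ring
  have Pmul : ∀ y z, P y → P z → P (y * z) := by
    rintro y z ⟨F, γ, hγ, hγ0, rfl⟩ Pz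
    rw [Finset.sum_mul]
    exact Finset.sum_induction _ P Padd Pzero fun k hk => Pmono (γ k) k z (hγ k) Pz
  refine Subring.closure_induction ?_ Pzero ?_ (fun x y _ _ hx hy => Padd x y hx hy)
    (fun x _ hx => Pneg x hx) (fun x y _ _ hx hy => Pmul x y hx hy) hx
  · rintro y (hy | hy)
    · have := single y 0 (fa_of_mem hy)
      simpa using this
    · simp only [Set.mem_insert_iff, Set.mem_singleton_iff] at hy
      rcases hy with rfl | rfl
      · have := single 1 1 fa_one
        simpa using this
      · have := single 1 (-1) fa_one
        simpa [zpow_neg_one] using this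
  · have := single 1 0 fa_one
    simpa using this

/-- Writing a nonzero element of `Frac(A)` times `b ^ r` as a sum of unit fractions with
denominators of the special shape `a * b ^ (-r)`. -/
private lemma egy_fa_mul {A : Subring L} (hA : EgySubring A) {b : L} (hb : b ≠ 0)
    {x : L} (hx : x ∈ FASet A) (hx0 : x ≠ 0) (r : ℤ) :
    ∃ s : Finset L, (∀ e ∈ s, ∃ a, a ∈ A ∧ a ≠ 0 ∧ e = a * b ^ (-r)) ∧
      x * b ^ r = ∑ e ∈ s, e⁻¹ := by
  obtain ⟨p, hp, q, hq, hq0, rfl⟩ := hx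
  have hp0 : p ≠ 0 := fun h => hx0 (by simp [h])
  obtain ⟨s₀, hs₀sub, hs₀ne, hs₀sum⟩ := hA p hp hp0
  have hc0 : q * b ^ (-r : ℤ) ≠ 0 := mul_ne_zero hq0 (zpow_ne_zero _ hb)
  refine ⟨s₀.image (· * (q * b ^ (-r : ℤ))), ?_, ?_⟩
  · intro e he
    obtain ⟨d, hd, rfl⟩ := Finset.mem_image.1 he
    exact ⟨d * q, mul_mem (hs₀sub hd) hq, mul_ne_zero (hs₀ne d hd) hq0, by ring⟩
  · rw [Finset.sum_image (fun a _ b _ h => mul_left_injective₀ hc0 h)]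
    have : ∀ d ∈ s₀, (d * (q * b ^ (-r : ℤ)))⁻¹ = d⁻¹ * (q⁻¹ * b ^ r) := by
      intro d hd
      rw [mul_inv, mul_inv, zpow_neg, inv_inv]
    rw [Finset.sum_congr rfl this, ← Finset.sum_mul, ← hs₀sum]
    field_simp

/-- THE key lemma: if `A` is an Egyptian subring of `L` and `b ≠ 0`, then `A[b, b⁻¹]` is an
Egyptian subring of `L`. -/
private lemma egySubring_closure_pair {A : Subring L} (hA : EgySubring A) {b : L}
    (hb : b ≠ 0) : EgySubring (Subring.closure ((A : Set L) ∪ {b, b⁻¹})) := by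
  set T := Subring.closure ((A : Set L) ∪ {b, b⁻¹}) with hT
  have hbT : b ∈ T := Subring.subset_closure (Set.mem_union_right _ (by simp))
  have hbiT : b⁻¹ ∈ T := Subring.subset_closure (Set.mem_union_right _ (by simp))
  intro x hx hx0
  obtain ⟨F, γ, hγ, hγ0, hxe⟩ := rep_lemma A b hb hx
  set G : AddSubgroup ℤ :=
    { carrier := {m | b ^ m ∈ FASet A}
      add_mem' := fun {m n} hm hn => by
        simp only [Set.mem_setOf_eq] at *
        rw [zpow_add₀ hb]; exact fa_mul hm hn
      zero_mem' := by
        simp only [Set.mem_setOf_eq, zpow_zero]; exact fa_one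
      neg_mem' := fun {m} hm => by
        simp only [Set.mem_setOf_eq] at *
        rw [zpow_neg]; exact fa_inv hm } with hG
  obtain ⟨g, hGg⟩ := Int.subgroup_cyclic G
  have hmemG : ∀ m : ℤ, b ^ m ∈ FASet A ↔ g ∣ m := by
    intro m
    constructor
    · intro hm
      have hmG : m ∈ G := hm
      rw [hGg, AddSubgroup.mem_closure_singleton] at hmG
      obtain ⟨n, hn⟩ := hmG
      exact ⟨n, by rw [← hn, zsmul_eq_mul]; push_cast; ring⟩
    · rintro ⟨c, rfl⟩
      have hg : b ^ g ∈ FASet A := by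
        have hgG : g ∈ G := by
          rw [hGg]; exact AddSubgroup.mem_closure_singleton.2 ⟨1, one_zsmul g⟩
        exact hgG
      rw [zpow_mul]
      exact fa_zpow hg c
  set δ : ℤ → L := fun r => ∑ k ∈ F.filter (fun k => k % g = r), γ k * b ^ (k - r) with hδ
  have hδFA : ∀ r, δ r ∈ FASet A := by
    intro r
    apply fa_sum
    intro k hk
    obtain ⟨hkF, hkr⟩ := Finset.mem_filter.1 hk
    apply fa_mul (hγ k)
    rw [hmemG, ← hkr]
    refine ⟨k / g, ?_⟩
    have := Int.emod_add_mul_ediv k g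
    linarith
  have hx2 : x = ∑ r ∈ F.image (· % g), δ r * b ^ r := by
    rw [hxe, ← Finset.sum_fiberwise_of_maps_to
      (fun k hk => Finset.mem_image_of_mem (· % g) hk) (fun k => γ k * b ^ k)]
    refine Finset.sum_congr rfl fun r hr => ?_
    rw [hδ]
    dsimp only
    rw [Finset.sum_mul]
    refine Finset.sum_congr rfl fun k hk => ?_
    rw [mul_assoc, ← zpow_add₀ hb, sub_add_cancel]
  set F₂ := (F.image (· % g)).filter (fun r => δ r ≠ 0) with hF₂
  have hx3 : x = ∑ r ∈ F₂, δ r * b ^ r := by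
    rw [hx2, hF₂, Finset.sum_filter_of_ne]
    intro r _ hne h0
    exact hne (by rw [h0, zero_mul])
  have hr_fix : ∀ r ∈ F₂, r % g = r := by
    intro r hr
    obtain ⟨k, _, rfl⟩ := Finset.mem_image.1 (Finset.mem_filter.1 hr).1
    exact Int.emod_emod_of_dvd k dvd_rfl
  have H : ∀ r ∈ F₂, ∃ s : Finset L, (∀ e ∈ s, ∃ a, a ∈ A ∧ a ≠ 0 ∧ e = a * b ^ (-r)) ∧
      δ r * b ^ r = ∑ e ∈ s, e⁻¹ :=
    fun r hr => egy_fa_mul hA hb (hδFA r) (Finset.mem_filter.1 hr).2 r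
  choose t ht1 ht2 using H
  have hdisj : (↑F₂.attach : Set { x // x ∈ F₂ }).PairwiseDisjoint
      (fun rr : { x // x ∈ F₂ } => t rr.1 rr.2) := by
    intro r1 _ r2 _ hne12
    rw [Function.onFun]
    rw [Finset.disjoint_left]
    intro e he1 he2
    obtain ⟨a1, ha1A, ha10, rfl⟩ := ht1 r1.1 r1.2 e he1
    obtain ⟨a2, ha2A, ha20, heq⟩ := ht1 r2.1 r2.2 _ he2
    have hb1 : b ^ (r1.1 : ℤ) ≠ 0 := zpow_ne_zero _ hb
    have hb2 : b ^ (r2.1 : ℤ) ≠ 0 := zpow_ne_zero _ hb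
    have e2 : a1 * b ^ (r2.1 : ℤ) = a2 * b ^ (r1.1 : ℤ) := by
      rw [zpow_neg, zpow_neg, ← div_eq_mul_inv, ← div_eq_mul_inv,
        div_eq_div_iff hb1 hb2] at heq
      exact heq
    have hmem : b ^ (r1.1 - r2.1) ∈ FASet A := by
      have hbe : b ^ (r1.1 - r2.1) = a1 / a2 := by
        rw [zpow_sub₀ hb, div_eq_div_iff (zpow_ne_zero _ hb) ha20]
        linear_combination -e2
      rw [hbe]
      exact fa_div (fa_of_mem ha1A) (fa_of_mem ha2A)
    have hdvd : g ∣ r1.1 - r2.1 := (hmemG _).1 hmem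
    obtain ⟨c, hc⟩ := hdvd
    have : r1.1 % g = r2.1 % g := by
      have : r1.1 = r2.1 + g * c := by linarith
      rw [this, Int.add_mul_emod_self_left]
    rw [hr_fix r1.1 r1.2, hr_fix r2.1 r2.2] at this
    exact hne12 (Subtype.ext this)
  refine ⟨F₂.attach.biUnion (fun rr => t rr.1 rr.2), ?_, ?_, ?_⟩
  · intro e he
    rw [Finset.mem_coe, Finset.mem_biUnion] at he
    obtain ⟨rr, _, hert⟩ := he
    obtain ⟨a, haA, ha0, rfl⟩ := ht1 rr.1 rr.2 e hert
    exact mul_mem (Subring.subset_closure (Set.mem_union_left _ haA))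
      (zpow_mem_subring hbT hbiT _)
  · intro e he
    rw [Finset.mem_biUnion] at he
    obtain ⟨rr, _, hert⟩ := he
    obtain ⟨a, haA, ha0, rfl⟩ := ht1 rr.1 rr.2 e hert
    exact mul_ne_zero ha0 (zpow_ne_zero _ hb)
  · rw [Finset.sum_biUnion hdisj]
    rw [show ∑ rr ∈ F₂.attach, ∑ e ∈ t rr.1 rr.2, e⁻¹
        = ∑ rr ∈ F₂.attach, δ rr.1 * b ^ (rr.1 : ℤ) from
      Finset.sum_congr rfl fun rr _ => (ht2 rr.1 rr.2).symm]
    rw [Finset.sum_attach F₂ (fun r => δ r * b ^ r)]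
    exact hx3

private lemma closure_union_closure (S T : Set L) :
    Subring.closure (↑(Subring.closure S) ∪ T) = Subring.closure (S ∪ T) := by
  apply le_antisymm
  · rw [Subring.closure_le]
    rintro x (hx | hx)
    · exact Subring.closure_mono Set.subset_union_left hx
    · exact Subring.subset_closure (Or.inr hx)
  · exact Subring.closure_mono (Set.union_subset_union_left T Subring.subset_closure)

private lemma closure_inv_mul (X : Set L) {f g : L} (hf : f ∈ Subring.closure X)
    (hg : g ∈ Subring.closure X) (hf0 : f ≠ 0) (hg0 : g ≠ 0) :
    Subring.closure (X ∪ {(f * g)⁻¹}) = Subring.closure (X ∪ {f⁻¹, g⁻¹}) := by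
  apply le_antisymm <;> rw [Subring.closure_le]
  · rintro x (hx | hx)
    · exact Subring.subset_closure (Or.inl hx)
    · simp only [Set.mem_singleton_iff] at hx
      subst hx
      rw [mul_inv]
      exact mul_mem (Subring.subset_closure (Set.mem_union_right _ (by simp)))
        (Subring.subset_closure (Set.mem_union_right _ (by simp)))
  · have hfg : (f * g)⁻¹ ∈ Subring.closure (X ∪ {(f * g)⁻¹}) :=
      Subring.subset_closure (Set.mem_union_right _ rfl)
    have hXle : Subring.closure X ≤ Subring.closure (X ∪ {(f * g)⁻¹}) :=
      Subring.closure_mono Set.subset_union_left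
    rintro x (hx | hx)
    · exact Subring.subset_closure (Or.inl hx)
    · simp only [Set.mem_insert_iff, Set.mem_singleton_iff] at hx
      rcases hx with rfl | rfl
      · have h : g * (f * g)⁻¹ = f⁻¹ := by
          rw [mul_inv, mul_comm f⁻¹, ← mul_assoc, mul_inv_cancel₀ hg0, one_mul]
        rw [← h]
        exact mul_mem (hXle hg) hfg
      · have h : f * (f * g)⁻¹ = g⁻¹ := by
          rw [mul_inv, ← mul_assoc, mul_inv_cancel₀ hf0, one_mul]
        rw [← h]
        exact mul_mem (hXle hf) hfg

private lemma closure_shift (X Y : Set L) (b : L) :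
    Subring.closure (X ∪ {b} ∪ Y) = Subring.closure (X ∪ {1 + b} ∪ Y) := by
  apply le_antisymm <;> rw [Subring.closure_le]
  · rintro x ((hx | hx) | hx)
    · exact Subring.subset_closure (Or.inl (Or.inl hx))
    · simp only [Set.mem_singleton_iff] at hx
      subst hx
      have hmem : (1 + x) ∈ Subring.closure (X ∪ {1 + x} ∪ Y) :=
        Subring.subset_closure (Or.inl (Or.inr rfl))
      have := sub_mem hmem (one_mem (Subring.closure (X ∪ {1 + x} ∪ Y)))
      simpa using this
    · exact Subring.subset_closure (Or.inr hx)
  · rintro x ((hx | hx) | hx)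
    · exact Subring.subset_closure (Or.inl (Or.inl hx))
    · simp only [Set.mem_singleton_iff] at hx
      subst hx
      exact add_mem (one_mem _) (Subring.subset_closure (Or.inl (Or.inr rfl)))
    · exact Subring.subset_closure (Or.inr hx)

private def SpanTop (B : Subring L) (s : Finset L) : Prop :=
  ∃ (ι : Type) (_ : Fintype ι) (c gg : ι → L),
    (∀ j, c j ∈ B) ∧ (∀ j, gg j ∈ s) ∧ ∑ j, c j * gg j = 1

private def LocEgySubring (B : Subring L) : Prop :=
  ∃ s : Finset L, (↑s : Set L) ⊆ (B : Set L) ∧ SpanTop B s ∧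
    ∀ f ∈ s, f ≠ 0 → EgySubring (Subring.closure ((B : Set L) ∪ {f⁻¹}))

private lemma locEgy_adjoin {B : Subring L} (hB : LocEgySubring B) (b : L) :
    LocEgySubring (Subring.closure ((B : Set L) ∪ {b})) := by
  by_cases hbtriv : b = 0 ∨ b = -1
  · have hbB : b ∈ B := by
      rcases hbtriv with rfl | rfl
      exacts [zero_mem B, neg_mem (one_mem B)]
    have heq : Subring.closure ((B : Set L) ∪ {b}) = B := by
      apply le_antisymm
      · rw [Subring.closure_le]
        rintro x (hx | hx)
        · exact hx
        · simp only [Set.mem_singleton_iff] at hx; subst hx; exact hbB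
      · intro x hx
        exact Subring.subset_closure (Or.inl hx)
    rw [heq]
    exact hB
  push_neg at hbtriv
  obtain ⟨hb0, hbm1⟩ := hbtriv
  have hb1 : (1 : L) + b ≠ 0 := fun h => hbm1 (by linear_combination h)
  obtain ⟨s, hsB, ⟨ι, hιfin, c, gg, hc, hgg, hsum⟩, hsEgy⟩ := hB
  set B' := Subring.closure ((B : Set L) ∪ {b}) with hB'
  have hBB' : (B : Set L) ⊆ (B' : Set L) := fun x hx => Subring.subset_closure (Or.inl hx)
  have hbB' : b ∈ B' := Subring.subset_closure (Or.inr rfl)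
  have h1bB' : (1 : L) + b ∈ B' := add_mem (one_mem B') hbB'
  set u := (s ×ˢ ({b, 1 + b} : Finset L)).image (fun p => p.1 * p.2) with hu
  have humem : ∀ p ∈ s ×ˢ ({b, 1 + b} : Finset L), p.1 * p.2 ∈ u :=
    fun p hp => Finset.mem_image_of_mem _ hp
  refine ⟨u, ?_, ?_, ?_⟩
  · intro e he
    rw [Finset.mem_coe, hu, Finset.mem_image] at he
    obtain ⟨p, hp, rfl⟩ := he
    obtain ⟨hp1, hp2⟩ := Finset.mem_product.1 hp
    have h2 : p.2 ∈ B' := by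
      rcases Finset.mem_insert.1 hp2 with h | h
      · rw [h]; exact hbB'
      · rw [Finset.mem_singleton.1 h]; exact h1bB'
    exact mul_mem (hBB' (hsB hp1)) h2
  · -- SpanTop B' u
    refine ⟨ι × Bool, inferInstance,
      fun p => if p.2 then c p.1 else -(c p.1),
      fun p => if p.2 then gg p.1 * (1 + b) else gg p.1 * b, ?_, ?_, ?_⟩
    · intro p
      by_cases h : p.2 <;> simp only [h, if_true, if_false]
      · exact hBB' (hc p.1)
      · exact neg_mem (hBB' (hc p.1))
    · intro p
      by_cases h : p.2 <;> simp only [h, if_true, if_false]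
      · exact humem (gg p.1, 1 + b) (Finset.mem_product.2 ⟨hgg p.1, by simp⟩)
      · exact humem (gg p.1, b) (Finset.mem_product.2 ⟨hgg p.1, by simp⟩)
    · rw [Fintype.sum_prod_type]
      have hterm : ∀ j : ι, (∑ v : Bool, (if v then c j else -(c j)) *
          (if v then gg j * (1 + b) else gg j * b)) = c j * gg j := by
        intro j
        rw [Fintype.sum_bool]
        simp only [eq_self_iff_true, if_true, if_neg Bool.false_ne_true]
        ring
      rw [Finset.sum_congr rfl fun j _ => hterm j, hsum]
  · intro h hhu hh0
    rw [hu, Finset.mem_image] at hhu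
    obtain ⟨⟨f, g⟩, hp, rfl⟩ := hhu
    obtain ⟨hp1, hp2⟩ := Finset.mem_product.1 hp
    simp only at hp1 hp2 ⊢
    have hf0 : f ≠ 0 := fun h => hh0 (by rw [h, zero_mul])
    have hg0 : g ≠ 0 := fun h => hh0 (by rw [h, mul_zero])
    have hfB' : f ∈ Subring.closure ((B : Set L) ∪ {b}) :=
      Subring.subset_closure (Or.inl (hsB hp1))
    have hEf : EgySubring (Subring.closure ((B : Set L) ∪ {f⁻¹})) :=
      hsEgy f hp1 hf0
    have step1 : Subring.closure ((B' : Set L) ∪ {(f * g)⁻¹})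
        = Subring.closure (((B : Set L) ∪ {b}) ∪ {(f * g)⁻¹}) := by
      rw [hB', closure_union_closure]
    rcases Finset.mem_insert.1 hp2 with hgb | hgb
    · subst hgb
      rw [step1, closure_inv_mul _ hfB' (Subring.subset_closure (Or.inr rfl)) hf0 hg0]
      have hset : ((B : Set L) ∪ {g}) ∪ {f⁻¹, g⁻¹}
          = ((B : Set L) ∪ {f⁻¹}) ∪ {g, g⁻¹} := by
        ext z
        simp only [Set.mem_union, Set.mem_insert_iff, Set.mem_singleton_iff]
        tauto
      rw [hset, ← closure_union_closure]
      exact egySubring_closure_pair hEf hg0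
    · rw [Finset.mem_singleton] at hgb
      subst hgb
      have hgB' : (1 : L) + b ∈ Subring.closure ((B : Set L) ∪ {b}) :=
        add_mem (one_mem _) (Subring.subset_closure (Or.inr rfl))
      rw [step1, closure_inv_mul _ hfB' hgB' hf0 hb1,
        closure_shift (B : Set L) ({f⁻¹, (1 + b)⁻¹} : Set L) b]
      have hset : ((B : Set L) ∪ {1 + b}) ∪ {f⁻¹, (1 + b)⁻¹}
          = ((B : Set L) ∪ {f⁻¹}) ∪ {1 + b, (1 + b)⁻¹} := by
        ext z
        simp only [Set.mem_union, Set.mem_insert_iff, Set.mem_singleton_iff]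
        tauto
      rw [hset, ← closure_union_closure]
      exact egySubring_closure_pair hEf hb1


private lemma locEgy_closure_finset (B : Subring L) (hB : LocEgySubring B) (t : Finset L) :
    LocEgySubring (Subring.closure ((B : Set L) ∪ ↑t)) := by
  classical
  induction t using Finset.induction_on with
  | empty => rw [Finset.coe_empty, Set.union_empty, Subring.closure_eq]; exact hB
  | @insert a t' ha ih =>
    have hset : (B : Set L) ∪ ↑(insert a t') = ((B : Set L) ∪ ↑t') ∪ {a} := by
      ext z
      simp only [Finset.coe_insert, Set.mem_union, Set.mem_insert_iff,
        Set.mem_singleton_iff, Finset.mem_coe]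
      tauto
    rw [hset, ← closure_union_closure]
    exact locEgy_adjoin ih a

private lemma isEgyptian_away_zero {A : Type*} [CommRing A] :
    IsEgyptian (Localization.Away (0 : A)) := by
  intro d hd
  exfalso
  apply hd
  have hu : IsUnit ((algebraMap A (Localization.Away (0 : A))) 0) :=
    IsLocalization.map_units (M := Submonoid.powers (0 : A)) (Localization.Away (0 : A))
      ⟨0, ⟨1, pow_one 0⟩⟩
  rw [map_zero] at hu
  obtain ⟨v, hv⟩ := hu.exists_right_inv
  rw [zero_mul] at hv
  calc d = d * 1 := (mul_one d).symm
  _ = 0 := by rw [← hv, mul_zero]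

/-- Entry: a locally Egyptian domain embedded in `L` gives a locally Egyptian subring. -/
private lemma entry_lemma {D : Type*} [CommRing D] [IsDomain D] (ψ : D →+* L)
    (hψ : Function.Injective ψ) (hD : IsLocallyEgyptian D) :
    LocEgySubring (ψ.range : Subring L) := by
  classical
  obtain ⟨s, hspan, hegy⟩ := hD
  refine ⟨s.image ψ, ?_, ?_, ?_⟩
  · intro x hx
    rw [Finset.mem_coe, Finset.mem_image] at hx
    obtain ⟨d, _, rfl⟩ := hx
    exact ⟨d, rfl⟩
  · -- SpanTop
    have h1 : (1 : D) ∈ Ideal.span (↑s : Set D) := hspan ▸ Submodule.mem_top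
    obtain ⟨f, -, hf⟩ := Submodule.mem_span_finset.1 h1
    simp only [smul_eq_mul] at hf
    set e := s.equivFin.symm with he
    refine ⟨Fin s.card, inferInstance, fun j => ψ (f ↑(e j)), fun j => ψ ↑(e j),
      fun j => ⟨f ↑(e j), rfl⟩, fun j => Finset.mem_image_of_mem ψ (e j).2, ?_⟩
    have h2 : ∑ j : Fin s.card, ψ (f ↑(e j)) * ψ ↑(e j)
        = ∑ x : ↥s, ψ (f ↑x) * ψ ↑x :=
      Equiv.sum_comp e (fun x : ↥s => ψ (f ↑x) * ψ ↑x)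
    rw [h2]
    have h3 : ∑ x : ↥s, ψ (f ↑x) * ψ ↑x = ψ (∑ x : ↥s, f ↑x * ↑x) := by
      rw [map_sum]
      exact Finset.sum_congr rfl fun x _ => (map_mul ψ _ _).symm
    rw [h3, Finset.sum_coe_sort s (fun i => f i * i), hf, map_one]
  · intro g hg hg0
    rw [Finset.mem_image] at hg
    obtain ⟨d, hd, rfl⟩ := hg
    have hd0 : d ≠ 0 := fun h => hg0 (by rw [h, map_zero])
    haveI : IsDomain (Localization.Away d) :=
      IsLocalization.isDomain_localization
        (powers_le_nonZeroDivisors_of_noZeroDivisors hd0)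
    obtain ⟨ψ', hinj', hrange'⟩ := bridge ψ hψ d hd0
    have := egySubring_range ψ' hinj' (hegy d hd)
    rwa [hrange'] at this

/-- Exit: a locally Egyptian subring of `L` gives a locally Egyptian ring. -/
private lemma exit_lemma {A : Type*} [CommRing A] (ψ : A →+* L)
    (hψ : Function.Injective ψ) (hLE : LocEgySubring (ψ.range : Subring L)) :
    IsLocallyEgyptian A := by
  classical
  obtain ⟨sL, hsub, ⟨ι, hιfin, c, gg, hc, hgg, hsum⟩, hegy⟩ := hLE
  refine ⟨sL.preimage ψ hψ.injOn, ?_, ?_⟩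
  · rw [Ideal.eq_top_iff_one]
    have hch : ∀ j : ι, ∃ a : A, ψ a = c j := fun j => hc j
    have hgh : ∀ j : ι, ∃ a : A, ψ a = gg j := fun j => hsub (hgg j)
    choose ca hca using hch
    choose ga hga using hgh
    have h1 : ψ (∑ j : ι, ca j * ga j) = ψ 1 := by
      rw [map_sum, map_one, ← hsum]
      exact Finset.sum_congr rfl fun j _ => by rw [map_mul, hca, hga]
    have h2 : (∑ j : ι, ca j * ga j) = 1 := hψ h1
    rw [← h2]
    refine Submodule.sum_mem _ fun j _ => ?_
    refine Ideal.mul_mem_left _ _ (Ideal.subset_span ?_)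
    rw [Finset.mem_coe, Finset.mem_preimage, hga]
    exact hgg j
  · intro f hf
    rw [Finset.mem_preimage] at hf
    by_cases hf0 : f = 0
    · subst hf0
      exact isEgyptian_away_zero
    · obtain ⟨ψ', hinj', hrange'⟩ := bridge ψ hψ f hf0
      have hψf0 : ψ f ≠ 0 := fun h => hf0 (hψ (by simpa using h))
      have hE : EgySubring (Subring.closure ((ψ.range : Set L) ∪ {(ψ f)⁻¹})) :=
        hegy (ψ f) hf hψf0
      rw [← hrange'] at hE
      exact isEgyptian_of_egySubring ψ' hinj' hE

end SectionL

/-- Let `D` be a locally Egyptian domain, `L` a field extension of the fraction field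
of `D` (i.e. a field in which `D` embeds), and `R` a `D`-subalgebra of `L` that is finitely
generated as a `D`-algebra.  Then `R` is locally Egyptian. -/
theorem statement10 (D : Type*) [CommRing D] [IsDomain D] (hD : IsLocallyEgyptian D)
    (L : Type u) [Field L] [Algebra D L]
    (hinj : Function.Injective (algebraMap D L))
    (R : Subalgebra D L) (hR : R.FG) :
    IsLocallyEgyptian R := by
  classical
  set ψD := algebraMap D L with hψD
  have hentry : LocEgySubring (ψD.range : Subring L) := entry_lemma ψD hinj hD
  obtain ⟨t, ht⟩ := hR
  have hLEc : LocEgySubring (Subring.closure ((ψD.range : Set L) ∪ ↑t)) :=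
    locEgy_closure_finset _ hentry t
  set ψ : ↥R →+* L := (Subalgebra.val R).toRingHom with hψ
  have hψinj : Function.Injective ψ := fun a b h => Subtype.ext h
  have hrange : (ψ.range : Subring L) = Subring.closure ((ψD.range : Set L) ∪ ↑t) := by
    have hkey : ∀ x : L, x ∈ R ↔ x ∈ Subring.closure ((ψD.range : Set L) ∪ ↑t) := by
      intro x
      have h1 : x ∈ R ↔ x ∈ Algebra.adjoin D (↑t : Set L) := by rw [ht]
      rw [h1, ← Subalgebra.mem_toSubring, Algebra.adjoin_eq_ring_closure]
      rw [show (ψD.range : Set L) = Set.range ψD from RingHom.coe_range ψD]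
    ext x
    constructor
    · rintro ⟨y, rfl⟩
      exact (hkey ↑y).1 y.2
    · intro hx
      exact ⟨⟨x, (hkey x).2 hx⟩, rfl⟩
  rw [← hrange] at hLEc
  exact exit_lemma ψ hψinj hLEc
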